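/- Let a, b, β be real with β > 0, ε ∈ (0,1), and suppose (a-b)² = δ², ab = (αγλ - δ)(αγλ + αδ)/(1+α)² for some δ > 0 and parameters 0 < α < 1, γ, λ > 0. If α(1-α)γλδ + αδ² + (δ²/ε²)(1-ε)(1+α)² < α²γ²λ² - (β/2)(2-ε)²(1+α)², then p(-1+ε) = -2δ²(1-ε) + 2abε² - βε²(2-ε)² > 0, where p(z) = 2(az+b)(bz+a) - β(1-z²)². -/

import Mathlib

theorem stmt_10 (a b β δ ε α γ lam : ℝ) (hβ : 0 < β)
    (hε : 0 < ε) (hε1 : ε < 1) (hδ : 0 < δ)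
    (hα : 0 < α) (hα1 : α < 1) (hγ : 0 < γ) (hlam : 0 < lam)
    (hab1 : (a - b)^2 = δ^2)
    (hab2 : a*b = (α*γ*lam - δ)*(α*γ*lam + α*δ) / (1+α)^2)
    (hcond : α*(1-α)*γ*lam*δ + α*δ^2 + (δ^2/ε^2)*(1-ε)*(1+α)^2
        < α^2*γ^2*lam^2 - (β/2)*(2-ε)^2*(1+α)^2) :
    2*(a*(-1+ε)+b)*(b*(-1+ε)+a) - β*(1-(-1+ε)^2)^2
        = -2*δ^2*(1-ε) + 2*(a*b)*ε^2 - β*ε^2*(2-ε)^2 ∧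
    0 < 2*(a*(-1+ε)+b)*(b*(-1+ε)+a) - β*(1-(-1+ε)^2)^2 := by
  have hne : (1+α)^2 ≠ 0 := by positivity
  have hεne : ε^2 ≠ 0 := by positivity
  have h2 : a*b*(1+α)^2 = (α*γ*lam - δ)*(α*γ*lam + α*δ) := by
    field_simp at hab2; linarith
  have heq : 2*(a*(-1+ε)+b)*(b*(-1+ε)+a) - β*(1-(-1+ε)^2)^2
      = -2*δ^2*(1-ε) + 2*(a*b)*ε^2 - β*ε^2*(2-ε)^2 := by
    linear_combination (2*(-1+ε)) * hab1
  refine ⟨heq, ?_⟩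
  rw [heq]
  -- from hcond: a*b*(1+α)^2 > (δ^2/ε^2)*(1-ε)*(1+α)^2 + (β/2)*(2-ε)^2*(1+α)^2
  have hc2 : (δ^2/ε^2)*(1-ε)*(1+α)^2 + (β/2)*(2-ε)^2*(1+α)^2 < a*b*(1+α)^2 := by
    nlinarith [hcond, h2]
  have hpos : (0:ℝ) < (1+α)^2 := by positivity
  have hc3 : (δ^2/ε^2)*(1-ε) + (β/2)*(2-ε)^2 < a*b := by
    nlinarith [hc2, hpos]
  have : δ^2*(1-ε) + (β/2)*(2-ε)^2*ε^2 < a*b*ε^2 := by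
    have := mul_lt_mul_of_pos_right hc3 (by positivity : (0:ℝ) < ε^2)
    calc δ^2*(1-ε) + (β/2)*(2-ε)^2*ε^2
        = ((δ^2/ε^2)*(1-ε) + (β/2)*(2-ε)^2)*ε^2 := by field_simp
      _ < a*b*ε^2 := this
  linarith
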